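/- In the IOTA DAG model, suppose the bottleneck event ℬ_i = {L(t_i) ≤ b} ∩ A_i ∩ B_i ∩ C_i occurs. Then for every time t ≥ t_i + κ_C − ε_max − h_M, the sets of tips satisfy L(t_i) ∩ L(t) = ∅. -/

import Mathlib

/- ## Deterministic core of the IOTA DAG model.

Time is discrete, `t_n = n`.  A realization of the model is described by four
sequences `θ e x y : ℕ → ℕ`: vertex `n ≥ 1` arrives at time `n`, has POW
duration `θ n`, observation delay `e n`, and parents `x n`, `y n`
(selected among the tips of the graph at time `n - e n`, truncated subtraction
encoding the convention `G(t) = G(t₀)` for `t < 0`).  The vertex `n` and the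
directed edges `(n, x n)`, `(n, y n)` are added to the DAG at time `n + θ n`,
i.e. they are present in `G(m)` exactly when `n + θ n < m`. -/

namespace IotaDAG

/-- `V θ n`: set of vertices of the DAG at time `n` (completed POW). -/
def V (θ : ℕ → ℕ) (n : ℕ) : Set ℕ := {0} ∪ {k | 1 ≤ k ∧ k + θ k < n}

/-- `E θ x y n`: set of (solid) directed edges of the DAG at time `n`. -/
def E (θ x y : ℕ → ℕ) (n : ℕ) : Set (ℕ × ℕ) :=
  {p | ∃ k, 1 ≤ k ∧ k + θ k < n ∧ (p = (k, x k) ∨ p = (k, y k))}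

/-- `V' θ n`: set of arrived vertices whose POW is unfinished at time `n`. -/
def V' (θ : ℕ → ℕ) (n : ℕ) : Set ℕ := {k | 1 ≤ k ∧ k < n ∧ n ≤ k + θ k}

/-- Tips at time `n`: vertices of in-degree 0. -/
def tips (θ x y : ℕ → ℕ) (n : ℕ) : Set ℕ :=
  {v | v ∈ V θ n ∧ ∀ i, (i, v) ∉ E θ x y n}

/-- Pending tips at time `n`: tips already selected as a parent by some arrived
vertex whose POW is unfinished. -/
def pend (θ x y : ℕ → ℕ) (n : ℕ) : Set ℕ :=
  {v | v ∈ tips θ x y n ∧ ∃ j ∈ V' θ n, x j = v ∨ y j = v}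

/-- Free tips at time `n`: tips that are not pending. -/
def free (θ x y : ℕ → ℕ) (n : ℕ) : Set ℕ := tips θ x y n \ pend θ x y n

/-- `L(t_n)`: number of tips. -/
noncomputable def L (θ x y : ℕ → ℕ) (n : ℕ) : ℕ := (tips θ x y n).ncard

/-- `W(t_n)`: number of pending tips. -/
noncomputable def W (θ x y : ℕ → ℕ) (n : ℕ) : ℕ := (pend θ x y n).ncard

/-- `F(t_n)`: number of free tips. -/
noncomputable def F (θ x y : ℕ → ℕ) (n : ℕ) : ℕ := (free θ x y n).ncard

/-- Validity of a realization: every arriving vertex selects both of its parents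
among the tips of the graph observed with its delay. -/
def Valid (θ e x y : ℕ → ℕ) : Prop :=
  ∀ n, 1 ≤ n → x n ∈ tips θ x y (n - e n) ∧ y n ∈ tips θ x y (n - e n)

/-- Directed edge relation of the limiting graph `⋃ₜ G(t)`. -/
def edgeRel (x y : ℕ → ℕ) (a b : ℕ) : Prop := 1 ≤ a ∧ (x a = b ∨ y a = b)

/-- `Reach x y w u`: `u` is reachable from `w`, i.e. there is a directed path
from `w` to `u` in the limiting graph `⋃ₜ G(t)`. -/
def Reach (x y : ℕ → ℕ) (w u : ℕ) : Prop := Relation.ReflTransGen (edgeRel x y) w u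

end IotaDAG
namespace IotaDAG

/- ## The bottleneck construction (Steps A, B, C). -/

/-- Step-A (tidying) event for a realization: every vertex `j` arriving at a time in
`[i, i + κA)` has delay `εmin`, POW duration `hM`, selects a single parent
(`x j = y j`) which lies outside the current free tips whenever possible. -/
def StepA (θ e x y : ℕ → ℕ) (hM εmin κA i : ℕ) : Prop :=
  ∀ j, 1 ≤ j → i ≤ j → j < i + κA →
    e j = εmin ∧ θ j = hM ∧ x j = y j ∧
    (¬ tips θ x y (j - εmin) ⊆ free θ x y j →
        x j ∈ tips θ x y (j - εmin) \ free θ x y j) ∧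
    (tips θ x y (j - εmin) ⊆ free θ x y j → x j ∈ tips θ x y (j - εmin))

/-- `FB`: the set consisting of the `2 (hM + εmin)` smallest elements of the set of
free tips at time `i + κA`. -/
def FB (θ x y : ℕ → ℕ) (hM εmin κA i : ℕ) : Set ℕ :=
  {v | v ∈ free θ x y (i + κA) ∧
        (free θ x y (i + κA) ∩ Set.Iic v).ncard ≤ 2 * (hM + εmin)}

/-- Step-B (preparation) event: every vertex `j` arriving at a time in
`[i + κA, i + κB)` has POW duration `hM`, delay `εmin`, and selects a single parent
among the tips it observes, avoiding the reserved set `FB`. -/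
def StepB (θ e x y : ℕ → ℕ) (hM εmin κA κB i : ℕ) : Prop :=
  ∀ j, 1 ≤ j → i + κA ≤ j → j < i + κB →
    θ j = hM ∧ e j = εmin ∧ x j = y j ∧
    x j ∈ tips θ x y (j - εmin) \ FB θ x y hM εmin κA i

/-- `c_i := F(t_i + κB) + |V'(t_i + κB)|`. -/
noncomputable def ci (θ x y : ℕ → ℕ) (κB i : ℕ) : ℕ :=
  F θ x y (i + κB) + (V' θ (i + κB)).ncard

/-- The labelling `ξ (i, j, k)` of the interchange structure: for `j = 1` it is the
`k`-th smallest element of `F(t_i + κB) ∪ V'(t_i + κB)` (1-indexed), and for `j ≥ 2`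
it is the vertex arriving at time `i + κB - 1 + (j - 2) * c_i + k`. -/
noncomputable def ξ (θ x y : ℕ → ℕ) (κB i j k : ℕ) : ℕ :=
  if j ≤ 1 then Nat.nth (fun v => v ∈ free θ x y (i + κB) ∪ V' θ (i + κB)) (k - 1)
  else i + κB - 1 + (j - 2) * ci θ x y κB i + k

/-- Step-C (interchange) event: every vertex `v` arriving at a time in
`[i + κB, i + κC]`, with additional label `(i, j, k)` where
`j = 2 + (v - (i + κB)) / c_i` and `k = (v - (i + κB)) % c_i + 1`, has POW duration
`hM`, delay `εmin`, and parents `x v = ξ (i, j-1, max 1 (k-1))`,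
`y v = ξ (i, j-1, min (k+1) c_i)`. -/
noncomputable def StepC (θ e x y : ℕ → ℕ) (hM εmin κB κC i : ℕ) : Prop :=
  ∀ v, 1 ≤ v → i + κB ≤ v → v ≤ i + κC →
    θ v = hM ∧ e v = εmin ∧
    x v = ξ θ x y κB i (1 + (v - (i + κB)) / ci θ x y κB i)
            (max 1 ((v - (i + κB)) % ci θ x y κB i)) ∧
    y v = ξ θ x y κB i (1 + (v - (i + κB)) / ci θ x y κB i)
            (min ((v - (i + κB)) % ci θ x y κB i + 2) (ci θ x y κB i))

end IotaDAG

namespace IotaDAG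

lemma V_mono' (θ : ℕ → ℕ) {m n : ℕ} (h : m ≤ n) : V θ m ⊆ V θ n := by
  intro v hv
  simp only [V, Set.mem_union, Set.mem_singleton_iff, Set.mem_setOf_eq] at *
  rcases hv with hv | ⟨h1, h2⟩
  · exact Or.inl hv
  · exact Or.inr ⟨h1, lt_of_lt_of_le h2 h⟩

lemma E_mono' (θ x y : ℕ → ℕ) {m n : ℕ} (h : m ≤ n) : E θ x y m ⊆ E θ x y n := by
  rintro p ⟨k, h1, h2, h3⟩
  exact ⟨k, h1, lt_of_lt_of_le h2 h, h3⟩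

lemma tips_between' {θ x y : ℕ → ℕ} {v m n n' : ℕ} (hm : v ∈ tips θ x y m)
    (hn' : v ∈ tips θ x y n') (h1 : m ≤ n) (h2 : n ≤ n') : v ∈ tips θ x y n :=
  ⟨V_mono' θ h1 hm.1, fun j hj => hn'.2 j (E_mono' θ x y h2 hj)⟩

lemma tips_finite' (θ x y : ℕ → ℕ) (n : ℕ) : (tips θ x y n).Finite := by
  apply (Set.finite_Iio (n + 1)).subset
  intro v hv
  have hV := hv.1
  simp only [V, Set.mem_union, Set.mem_singleton_iff, Set.mem_setOf_eq] at hV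
  rcases hV with rfl | ⟨h1, h2⟩
  · simp
  · exact Set.mem_Iio.mpr (by omega)

lemma V'_finite' (θ : ℕ → ℕ) (n : ℕ) : (V' θ n).Finite :=
  (Set.finite_Iio n).subset (fun v hv => Set.mem_Iio.mpr hv.2.1)

end IotaDAG

open IotaDAG

/-- Suppose the bottleneck event
`ℬ_i = {L(t_i) ≤ b} ∩ A_i ∩ B_i ∩ C_i` occurs.  Then for every
`t ≥ t_i + κ_C - ε_max - h_M` (phrased without truncated subtraction as
`t + ε_max + h_M ≥ i + κ_C`) the sets of tips satisfy `L(t_i) ∩ L(t) = ∅`. -/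
theorem old_tips_disappear
    (M : ℕ) (hM2 : 2 ≤ M)
    (h : ℕ → ℕ) (hpos : 0 < h 1) (hmono : StrictMonoOn h (Set.Icc 1 M))
    (Iε : Finset ℕ) (hIε : Iε.Nonempty) (hεmin : 0 < Iε.min' hIε)
    (θ e x y : ℕ → ℕ)
    (hθ : ∀ n, 1 ≤ n → ∃ k, 1 ≤ k ∧ k ≤ M ∧ θ n = h k)
    (he : ∀ n, 1 ≤ n → e n ∈ Iε)
    (hvalid : Valid θ e x y)
    (hhM : 1 < h M)
    (b : ℝ)
    (hb : 10 * (h M : ℝ) - 6 * (h 1 : ℝ) + 3 * M * (Iε.max' hIε : ℝ) + 2 < b)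
    (κA κB κC : ℕ)
    (hκA : 1 + max (2 * (h M : ℝ))
        (3 * (h M : ℝ) * ((h M : ℝ) + (Iε.min' hIε : ℝ)) / ((h M : ℝ) - 1)) < (κA : ℝ))
    (hκB : κB = κA + Iε.min' hIε + 1)
    (hκC : (κC : ℝ) = κB + 2 * (b + M * κB + h M) ^ 2 + h M + Iε.max' hIε + 1)
    (i : ℕ)
    (hLb : (L θ x y i : ℝ) ≤ b)
    (hA : StepA θ e x y (h M) (Iε.min' hIε) κA i)
    (hB : StepB θ e x y (h M) (Iε.min' hIε) κA κB i)
    (hC : StepC θ e x y (h M) (Iε.min' hIε) κB κC i) :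
    ∀ t : ℕ, i + κC ≤ t + Iε.max' hIε + h M →
      tips θ x y i ∩ tips θ x y t = ∅ := by
  
  classical
  intro t ht
  -- θ is bounded by h M
  have h1M : h 1 < h M := by
    apply hmono (Set.mem_Icc.mpr ⟨le_rfl, by omega⟩) (Set.mem_Icc.mpr ⟨by omega, le_rfl⟩)
    omega
  have hθle : ∀ n, 1 ≤ n → θ n ≤ h M := by
    intro n hn
    obtain ⟨k, hk1, hkM, hθn⟩ := hθ n hn
    rw [hθn]
    rcases eq_or_lt_of_le hkM with rfl | hlt
    · exact le_rfl
    · exact (hmono (Set.mem_Icc.mpr ⟨hk1, hkM⟩)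
        (Set.mem_Icc.mpr ⟨by omega, le_rfl⟩) hlt).le
  -- cardinality bounds
  have hV'card : (V' θ (i + κB)).ncard ≤ h M := by
    have hsub : V' θ (i + κB) ⊆ ↑(Finset.Ico (i + κB - h M) (i + κB)) := by
      intro v hv
      obtain ⟨hv1, hv2, hv3⟩ := hv
      have := hθle v hv1
      simp only [Finset.coe_Ico, Set.mem_Ico]
      omega
    calc (V' θ (i + κB)).ncard
        ≤ (↑(Finset.Ico (i + κB - h M) (i + κB)) : Set ℕ).ncard :=
          Set.ncard_le_ncard hsub (Finset.finite_toSet _)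
      _ = (Finset.Ico (i + κB - h M) (i + κB)).card := Set.ncard_coe_finset _
      _ ≤ h M := by rw [Nat.card_Ico]; omega
  have hLbound : (tips θ x y (i + κB)).ncard ≤ L θ x y i + (κB + h M) := by
    have htipsub : tips θ x y (i + κB) ⊆
        tips θ x y i ∪ ↑(Finset.Ico (i - h M) (i + κB)) := by
      intro v hv
      by_cases hvi : v ∈ V θ i
      · exact Or.inl ⟨hvi, fun j hj => hv.2 j (E_mono' θ x y (Nat.le_add_right i κB) hj)⟩
      · right
        have hV := hv.1
        simp only [V, Set.mem_union, Set.mem_singleton_iff, Set.mem_setOf_eq] at hV hvi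
        push_neg at hvi
        rcases hV with rfl | ⟨h1, h2⟩
        · exact absurd rfl hvi.1
        · have h3 : i ≤ v + θ v := hvi.2 h1
          have := hθle v h1
          simp only [Finset.coe_Ico, Set.mem_Ico]
          omega
    calc (tips θ x y (i + κB)).ncard
        ≤ (tips θ x y i ∪ ↑(Finset.Ico (i - h M) (i + κB))).ncard :=
          Set.ncard_le_ncard htipsub ((tips_finite' θ x y i).union (Finset.finite_toSet _))
      _ ≤ (tips θ x y i).ncard + (↑(Finset.Ico (i - h M) (i + κB)) : Set ℕ).ncard :=
          Set.ncard_union_le _ _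
      _ ≤ L θ x y i + (κB + h M) := by
          rw [Set.ncard_coe_finset, Nat.card_Ico]
          have : (tips θ x y i).ncard = L θ x y i := rfl
          omega
  have hFle : F θ x y (i + κB) ≤ (tips θ x y (i + κB)).ncard :=
    Set.ncard_le_ncard Set.diff_subset (tips_finite' θ x y (i + κB))
  have hcibound : ci θ x y κB i ≤ L θ x y i + κB + 2 * h M := by
    have h1 := hFle; have h2 := hLbound; have h3 := hV'card
    unfold ci
    omega
  -- the key arithmetic inequality
  have hKEY : κB + ci θ x y κB i + 2 * h M + Iε.max' hIε ≤ κC := by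
    have hcR : (ci θ x y κB i : ℝ) ≤ (b : ℝ) + κB + 2 * h M := by
      have h1 : (ci θ x y κB i : ℝ) ≤ (L θ x y i : ℝ) + κB + 2 * h M := by
        exact_mod_cast hcibound
      linarith
    have h1M' : (h 1 : ℝ) + 1 ≤ (h M : ℝ) := by exact_mod_cast h1M
    have hM2'' : (2 : ℝ) ≤ (h M : ℝ) := by exact_mod_cast hhM
    have hMr : (2 : ℝ) ≤ (M : ℝ) := by exact_mod_cast hM2
    have hemax1 : (1 : ℝ) ≤ (Iε.max' hIε : ℝ) := by
      have h1 : 1 ≤ Iε.max' hIε :=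
        le_trans hεmin (Finset.min'_le Iε _ (Iε.max'_mem hIε))
      exact_mod_cast h1
    have hκB0 : (0 : ℝ) ≤ (κB : ℝ) := by positivity
    have hreal : (κB : ℝ) + ci θ x y κB i + 2 * h M + Iε.max' hIε ≤ (κC : ℝ) := by
      rw [hκC]
      nlinarith [sq_nonneg ((b : ℝ) + M * κB + h M - 3), sq_nonneg ((b : ℝ) + M * κB + h M),
        mul_nonneg hκB0 (by linarith : (0:ℝ) ≤ (M:ℝ) - 1)]
    exact_mod_cast hreal
  have hκB1 : 1 ≤ κB := by omega
  have hTt : i + κB + ci θ x y κB i + h M ≤ t := by omega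
  -- main argument
  ext σ
  simp only [Set.mem_inter_iff, Set.mem_empty_iff_false, iff_false, not_and]
  intro hσi hσt
  have hσB : σ ∈ tips θ x y (i + κB) :=
    tips_between' hσi hσt (Nat.le_add_right i κB) (by omega)
  by_cases hp : σ ∈ pend θ x y (i + κB)
  · -- pending case: consumed by a vertex with unfinished POW
    obtain ⟨-, j, hjV', hxy⟩ := hp
    obtain ⟨hj1, hjlt, -⟩ := hjV'
    have hjθ := hθle j hj1
    have hjt : j + θ j < t := by omega
    rcases hxy with hxj | hyj
    · exact hσt.2 j ⟨j, hj1, hjt, Or.inl (by rw [hxj])⟩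
    · exact hσt.2 j ⟨j, hj1, hjt, Or.inr (by rw [hyj])⟩
  · -- free case: consumed by a first-block Step-C vertex
    have hσfree : σ ∈ free θ x y (i + κB) := ⟨hσB, hp⟩
    have hPσ : σ ∈ free θ x y (i + κB) ∪ V' θ (i + κB) := Or.inl hσfree
    have hPfin : (setOf (fun v => v ∈ free θ x y (i + κB) ∪ V' θ (i + κB))).Finite := by
      show (free θ x y (i + κB) ∪ V' θ (i + κB)).Finite
      exact ((tips_finite' θ x y (i + κB)).subset Set.diff_subset).union (V'_finite' θ (i + κB))
    have hcard : (setOf (fun v => v ∈ free θ x y (i + κB) ∪ V' θ (i + κB))).ncard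
        = ci θ x y κB i := by
      have hdisj : Disjoint (free θ x y (i + κB)) (V' θ (i + κB)) := by
        rw [Set.disjoint_left]
        intro a ha ha'
        obtain ⟨ha1, ha2, ha3⟩ := ha'
        have hV := ha.1.1
        simp only [V, Set.mem_union, Set.mem_singleton_iff, Set.mem_setOf_eq] at hV
        rcases hV with rfl | ⟨h1, h2⟩ <;> omega
      show (free θ x y (i + κB) ∪ V' θ (i + κB)).ncard = ci θ x y κB i
      rw [Set.ncard_union_eq hdisj ((tips_finite' θ x y (i + κB)).subset Set.diff_subset)
        (V'_finite' θ (i + κB))]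
      rfl
    set m := Nat.count (fun v => v ∈ free θ x y (i + κB) ∪ V' θ (i + κB)) σ with hm_def
    have hnth : Nat.nth (fun v => v ∈ free θ x y (i + κB) ∪ V' θ (i + κB)) m = σ :=
      Nat.nth_count hPσ
    have hmc : m < ci θ x y κB i := by
      have h1 := Nat.count_lt_card hPfin hPσ
      exact lt_of_lt_of_eq h1 ((Set.ncard_eq_toFinset_card _ hPfin).symm.trans hcard)
    -- Step-C parents of the first-block vertices
    have hstep : ∀ r, r < ci θ x y κB i →
        θ (i + κB + r) = h M ∧
        x (i + κB + r) = Nat.nth (fun v => v ∈ free θ x y (i + κB) ∪ V' θ (i + κB))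
          (max 1 r - 1) ∧
        y (i + κB + r) = Nat.nth (fun v => v ∈ free θ x y (i + κB) ∪ V' θ (i + κB))
          (min (r + 2) (ci θ x y κB i) - 1) := by
      intro r hr
      obtain ⟨hθv, hev, hxv, hyv⟩ := hC (i + κB + r) (by omega) (by omega) (by omega)
      have hsub : i + κB + r - (i + κB) = r := by omega
      rw [hsub, Nat.div_eq_of_lt hr, Nat.mod_eq_of_lt hr] at hxv hyv
      refine ⟨hθv, ?_, ?_⟩
      · rw [hxv]; simp [ξ]
      · rw [hyv]; simp [ξ]
    -- find the consuming vertex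
    obtain ⟨r, hrc, hparent⟩ : ∃ r, r < ci θ x y κB i ∧
        (x (i + κB + r) = σ ∨ y (i + κB + r) = σ) := by
      rcases lt_or_eq_of_le (Nat.succ_le_of_lt hmc) with hmlt | hmeq
      · refine ⟨m + 1, hmlt, Or.inl ?_⟩
        obtain ⟨-, hx', -⟩ := hstep (m + 1) hmlt
        rw [hx']
        have : max 1 (m + 1) - 1 = m := by omega
        rw [this, hnth]
      · rcases Nat.lt_or_ge (ci θ x y κB i) 2 with hc1 | hc2
        · refine ⟨0, by omega, Or.inl ?_⟩
          obtain ⟨-, hx', -⟩ := hstep 0 (by omega)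
          rw [hx']
          have : max 1 0 - 1 = m := by omega
          rw [this, hnth]
        · refine ⟨ci θ x y κB i - 2, by omega, Or.inr ?_⟩
          obtain ⟨-, -, hy'⟩ := hstep (ci θ x y κB i - 2) (by omega)
          rw [hy']
          have : min (ci θ x y κB i - 2 + 2) (ci θ x y κB i) - 1 = m := by omega
          rw [this, hnth]
    obtain ⟨hθv, -, -⟩ := hstep r hrc
    have hvt : (i + κB + r) + θ (i + κB + r) < t := by rw [hθv]; omega
    rcases hparent with hxp | hyp
    · exact hσt.2 (i + κB + r) ⟨i + κB + r, by omega, hvt, Or.inl (by rw [hxp])⟩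
    · exact hσt.2 (i + κB + r) ⟨i + κB + r, by omega, hvt, Or.inr (by rw [hyp])⟩
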